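/- Let $\theta \in C^2[0,1]$ be a positive non-constant solution of $\mu\theta'' + \theta(m-\theta) = 0$ with Neumann boundary conditions, where $m \in C^1[0,1]$ satisfies: $m' > 0$ on $[0,\rho)$ and $m' < 0$ on $(\rho,1]$ for some $\rho \in (0,1)$, and $\min_{[0,1]} m^+ < \theta < \max_{[0,1]} m$. Then $\theta'$ changes sign at most once in $(0,1)$: either $\theta' > 0$ on $(0,1)$, or $\theta' < 0$ on $(0,1)$, or there exists a unique $x_1 \in (0,1)$ with $\theta' > 0$ on $(0,x_1)$, $\theta'(x_1) = 0$, $\theta''(x_1) < 0$, and $\theta' < 0$ on $(x_1,1)$. -/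

import Mathlib

open Set Filter Topology


private lemma slope_nonpos_right {g : ℝ → ℝ} {L a b : ℝ}
    (hd : HasDerivWithinAt g L (Icc 0 1) a) (ha : g a = 0) (hab : a < b)
    (h0 : 0 ≤ a) (h1 : b ≤ 1) (hneg : ∀ x ∈ Ioo a b, g x < 0) : L ≤ 0 := by
  rw [hasDerivWithinAt_iff_tendsto_slope] at hd
  have hsub : Ioo a b ⊆ Icc (0:ℝ) 1 \ {a} := fun x hx =>
    ⟨⟨h0.trans hx.1.le, hx.2.le.trans h1⟩, ne_of_gt hx.1⟩
  have hne : (𝓝[Ioo a b] a).NeBot := by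
    rw [← mem_closure_iff_nhdsWithin_neBot, closure_Ioo hab.ne]
    exact left_mem_Icc.mpr hab.le
  have ht : Tendsto (slope g a) (𝓝[Ioo a b] a) (𝓝 L) :=
    hd.mono_left (nhdsWithin_mono _ hsub)
  refine le_of_tendsto ht ?_
  filter_upwards [eventually_mem_nhdsWithin] with x hx
  rw [slope_def_field, ha, sub_zero]
  exact div_nonpos_of_nonpos_of_nonneg (hneg x hx).le (by linarith [hx.1])

private lemma slope_nonneg_right {g : ℝ → ℝ} {L a b : ℝ}
    (hd : HasDerivWithinAt g L (Icc 0 1) a) (ha : g a = 0) (hab : a < b)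
    (h0 : 0 ≤ a) (h1 : b ≤ 1) (hpos : ∀ x ∈ Ioo a b, 0 < g x) : 0 ≤ L := by
  have := slope_nonpos_right (g := fun x => -g x) (hd.neg) (by simp [ha]) hab h0 h1
    (fun x hx => by simpa using hpos x hx)
  linarith

private lemma slope_nonneg_left {g : ℝ → ℝ} {L a b : ℝ}
    (hd : HasDerivWithinAt g L (Icc 0 1) b) (hb : g b = 0) (hab : a < b)
    (h0 : 0 ≤ a) (h1 : b ≤ 1) (hneg : ∀ x ∈ Ioo a b, g x < 0) : 0 ≤ L := by
  rw [hasDerivWithinAt_iff_tendsto_slope] at hd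
  have hsub : Ioo a b ⊆ Icc (0:ℝ) 1 \ {b} := fun x hx =>
    ⟨⟨h0.trans hx.1.le, hx.2.le.trans h1⟩, ne_of_lt hx.2⟩
  have hne : (𝓝[Ioo a b] b).NeBot := by
    rw [← mem_closure_iff_nhdsWithin_neBot, closure_Ioo hab.ne]
    exact right_mem_Icc.mpr hab.le
  have ht : Tendsto (slope g b) (𝓝[Ioo a b] b) (𝓝 L) :=
    hd.mono_left (nhdsWithin_mono _ hsub)
  refine ge_of_tendsto ht ?_
  filter_upwards [eventually_mem_nhdsWithin] with x hx
  rw [slope_def_field, hb, sub_zero]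
  have hx2 : x - b < 0 := by linarith [hx.2]
  exact le_of_lt (div_pos_of_neg_of_neg (hneg x hx) hx2)

private lemma slope_nonpos_left {g : ℝ → ℝ} {L a b : ℝ}
    (hd : HasDerivWithinAt g L (Icc 0 1) b) (hb : g b = 0) (hab : a < b)
    (h0 : 0 ≤ a) (h1 : b ≤ 1) (hpos : ∀ x ∈ Ioo a b, 0 < g x) : L ≤ 0 := by
  have := slope_nonneg_left (g := fun x => -g x) (hd.neg) (by simp [hb]) hab h0 h1
    (fun x hx => by simpa using hpos x hx)
  linarith

private lemma sign_near_neg {g : ℝ → ℝ} {L x₀ : ℝ} (hd : HasDerivAt g L x₀)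
    (h0 : g x₀ = 0) (hL : L < 0) :
    ∃ δ > 0, (∀ x ∈ Ioo (x₀ - δ) x₀, 0 < g x) ∧ (∀ x ∈ Ioo x₀ (x₀ + δ), g x < 0) := by
  rw [hasDerivAt_iff_tendsto_slope] at hd
  have hev : ∀ᶠ x in 𝓝[≠] x₀, slope g x₀ x < 0 := hd.eventually_lt_const hL
  rw [eventually_nhdsWithin_iff] at hev
  rcases Metric.eventually_nhds_iff.mp hev with ⟨δ, hδ, hball⟩
  have key : ∀ x, x ≠ x₀ → |x - x₀| < δ → g x / (x - x₀) < 0 := by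
    intro x hne hdist
    have := hball (y := x) (by rwa [Real.dist_eq]) hne
    rwa [slope_def_field, h0, sub_zero] at this
  refine ⟨δ, hδ, ?_, ?_⟩
  · intro x hx
    have h := key x (ne_of_lt hx.2) (by rw [abs_lt]; constructor <;> linarith [hx.1, hx.2])
    rcases div_neg_iff.mp h with ⟨hg, hx'⟩ | ⟨hg, hx'⟩
    · exact hg
    · linarith [hx.2]
  · intro x hx
    have h := key x (ne_of_gt hx.1) (by rw [abs_lt]; constructor <;> linarith [hx.1, hx.2])
    rcases div_neg_iff.mp h with ⟨hg, hx'⟩ | ⟨hg, hx'⟩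
    · linarith [hx.1]
    · exact hg

private lemma sign_near_pos {g : ℝ → ℝ} {L x₀ : ℝ} (hd : HasDerivAt g L x₀)
    (h0 : g x₀ = 0) (hL : 0 < L) :
    ∃ δ > 0, (∀ x ∈ Ioo (x₀ - δ) x₀, g x < 0) ∧ (∀ x ∈ Ioo x₀ (x₀ + δ), 0 < g x) := by
  obtain ⟨δ, hδ, hl, hr⟩ := sign_near_neg (g := fun x => -g x) (hd.neg) (by simp [h0]) (by linarith)
  exact ⟨δ, hδ, fun x hx => by linarith [hl x hx], fun x hx => by linarith [hr x hx]⟩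

private lemma second_order_neg {g h : ℝ → ℝ} {x₀ M : ℝ}
    (hgcont : ContinuousOn g (Icc 0 1))
    (hgd : ∀ x ∈ Ioo (0:ℝ) 1, HasDerivAt g (h x) x)
    (hx₀ : x₀ ∈ Ioo (0:ℝ) 1) (hg0 : g x₀ = 0) (hh0 : h x₀ = 0)
    (hM : HasDerivAt h M x₀) (hMneg : M < 0) :
    ∃ δ > 0, (∀ x ∈ Ioo (x₀ - δ) x₀, g x < 0) ∧ (∀ x ∈ Ioo x₀ (x₀ + δ), g x < 0) := by
  obtain ⟨δ₀, hδ₀, hl, hr⟩ := sign_near_neg hM hh0 hMneg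
  obtain ⟨δ, hδdef⟩ : ∃ z, z = min δ₀ (min x₀ (1 - x₀)) := ⟨_, rfl⟩
  have hδpos : 0 < δ := by rw [hδdef]; exact lt_min hδ₀ (lt_min hx₀.1 (by linarith [hx₀.2]))
  have hδle : δ ≤ δ₀ := by rw [hδdef]; exact min_le_left _ _
  have hδx : δ ≤ x₀ := by rw [hδdef]; exact (min_le_right _ _).trans (min_le_left _ _)
  have hδ1 : δ ≤ 1 - x₀ := by rw [hδdef]; exact (min_le_right _ _).trans (min_le_right _ _)
  refine ⟨δ, hδpos, ?_, ?_⟩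
  · have hmono : StrictMonoOn g (Icc (x₀ - δ) x₀) := by
      apply strictMonoOn_of_deriv_pos (convex_Icc _ _)
        (hgcont.mono (Icc_subset_Icc (by linarith) hx₀.2.le))
      intro x hx
      rw [interior_Icc] at hx
      have hx1 : x ∈ Ioo (0:ℝ) 1 := ⟨by linarith [hx.1], by linarith [hx.2, hx₀.2]⟩
      rw [(hgd x hx1).deriv]
      exact hl x ⟨by linarith [hx.1], hx.2⟩
    intro x hx
    have := hmono ⟨hx.1.le, hx.2.le⟩ (right_mem_Icc.mpr (by linarith)) hx.2
    rwa [hg0] at this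
  · have hanti : StrictAntiOn g (Icc x₀ (x₀ + δ)) := by
      apply strictAntiOn_of_deriv_neg (convex_Icc _ _)
        (hgcont.mono (Icc_subset_Icc hx₀.1.le (by linarith)))
      intro x hx
      rw [interior_Icc] at hx
      have hx1 : x ∈ Ioo (0:ℝ) 1 := ⟨by linarith [hx.1, hx₀.1], by linarith [hx.2]⟩
      rw [(hgd x hx1).deriv]
      exact hr x ⟨hx.1, by linarith [hx.2]⟩
    intro x hx
    have := hanti (left_mem_Icc.mpr (by linarith)) ⟨hx.1.le, hx.2.le⟩ hx.1
    rwa [hg0] at this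

private lemma second_order_pos {g h : ℝ → ℝ} {x₀ M : ℝ}
    (hgcont : ContinuousOn g (Icc 0 1))
    (hgd : ∀ x ∈ Ioo (0:ℝ) 1, HasDerivAt g (h x) x)
    (hx₀ : x₀ ∈ Ioo (0:ℝ) 1) (hg0 : g x₀ = 0) (hh0 : h x₀ = 0)
    (hM : HasDerivAt h M x₀) (hMpos : 0 < M) :
    ∃ δ > 0, (∀ x ∈ Ioo (x₀ - δ) x₀, 0 < g x) ∧ (∀ x ∈ Ioo x₀ (x₀ + δ), 0 < g x) := by
  obtain ⟨δ, hδ, hl, hr⟩ := second_order_neg (g := fun x => -g x) (h := fun x => -h x)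
    hgcont.neg (fun x hx => (hgd x hx).neg) hx₀ (by simp [hg0]) (by simp [hh0]) hM.neg
    (by linarith)
  exact ⟨δ, hδ, fun x hx => by linarith [hl x hx], fun x hx => by linarith [hr x hx]⟩
private lemma no_left_neg {ρ : ℝ} {m θ g h : ℝ → ℝ} (hρ : ρ ∈ Ioo (0:ℝ) 1)
    (hgcont : ContinuousOn g (Icc 0 1)) (hθcont : ContinuousOn θ (Icc 0 1))
    (hgdW : ∀ x ∈ Icc (0:ℝ) 1, HasDerivWithinAt g (h x) (Icc 0 1) x)
    (hθd : ∀ x ∈ Ioo (0:ℝ) 1, HasDerivAt θ (g x) x)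
    (hiff : ∀ x ∈ Icc (0:ℝ) 1, (h x < 0 ↔ θ x < m x) ∧ (0 < h x ↔ m x < θ x))
    (hmono : StrictMonoOn m (Icc 0 ρ))
    (hbc0 : g 0 = 0) {b : ℝ} (hb : b ∈ Ioo (0:ℝ) 1) (hbρ : b ≤ ρ) (hgb : g b = 0)
    (hδex : ∃ δ > 0, ∀ x ∈ Ioo (b - δ) b, g x < 0) : False := by
  obtain ⟨δ₀, hδ₀, hneg₀⟩ := hδex
  obtain ⟨δ, hδdef⟩ : ∃ z, z = min δ₀ (b / 2) := ⟨_, rfl⟩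
  have hδpos : 0 < δ := by rw [hδdef]; exact lt_min hδ₀ (by linarith [hb.1])
  have hδb : δ < b := by
    have := min_le_right δ₀ (b / 2); linarith [hb.1]
  have hneg : ∀ x ∈ Ioo (b - δ) b, g x < 0 := by
    intro x hx
    have h1 := min_le_left δ₀ (b / 2)
    exact hneg₀ x ⟨by linarith [hx.1], hx.2⟩
  have hTclosed : IsClosed (Icc (0:ℝ) (b - δ) ∩ g ⁻¹' {0}) :=
    (hgcont.mono (Icc_subset_Icc le_rfl (by linarith [hb.2]))).preimage_isClosed_of_isClosed
      isClosed_Icc isClosed_singleton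
  have hTcp : IsCompact (Icc (0:ℝ) (b - δ) ∩ g ⁻¹' {0}) :=
    isCompact_Icc.of_isClosed_subset hTclosed inter_subset_left
  have hTne : (Icc (0:ℝ) (b - δ) ∩ g ⁻¹' {0}).Nonempty :=
    ⟨0, ⟨le_rfl, by linarith⟩, by simpa using hbc0⟩
  obtain ⟨a, ha⟩ : ∃ z, z = sSup (Icc (0:ℝ) (b - δ) ∩ g ⁻¹' {0}) := ⟨_, rfl⟩
  have haT : a ∈ Icc (0:ℝ) (b - δ) ∩ g ⁻¹' {0} := ha ▸ hTcp.sSup_mem hTne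
  obtain ⟨⟨ha0, haδ⟩, hga'⟩ := haT
  have hga : g a = 0 := by simpa using hga'
  have hab : a < b := by linarith
  have hglt : ∀ x ∈ Ioo a b, g x < 0 := by
    intro x hx
    by_contra hge
    push_neg at hge
    have hzero : ∀ z, a < z → z < b → g z ≠ 0 := by
      intro z hz1 hz2 h0
      have hzle : z ≤ b - δ := by
        by_contra hgt; push_neg at hgt
        exact absurd h0 (ne_of_lt (hneg z ⟨hgt, hz2⟩))
      have : z ≤ a := ha ▸ le_csSup hTcp.bddAbove ⟨⟨by linarith, hzle⟩, by simpa using h0⟩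
      linarith
    have hxpos : 0 < g x := lt_of_le_of_ne hge (Ne.symm (hzero x hx.1 hx.2))
    have hxle : x ≤ b - δ := by
      by_contra hgt; push_neg at hgt
      exact absurd hxpos (not_lt.mpr (hneg x ⟨hgt, hx.2⟩).le)
    have hgw : g (b - δ / 2) < 0 := hneg _ ⟨by linarith, by linarith⟩
    have hxw : x < b - δ / 2 := by linarith
    have hivt : (0:ℝ) ∈ g '' Icc x (b - δ / 2) := by
      apply intermediate_value_Icc' hxw.le (hgcont.mono ?_)
      · exact ⟨hgw.le, hxpos.le⟩
      · intro y hy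
        exact ⟨by linarith [hy.1, hx.1], by linarith [hy.2, hb.2]⟩
    obtain ⟨z, hz, hgz⟩ := hivt
    exact hzero z (lt_of_lt_of_le hx.1 hz.1) (by linarith [hz.2]) hgz
  have haIcc : a ∈ Icc (0:ℝ) 1 := ⟨ha0, by linarith [hb.2]⟩
  have hbIcc : b ∈ Icc (0:ℝ) 1 := ⟨hb.1.le, hb.2.le⟩
  have hha : h a ≤ 0 := slope_nonpos_right (hgdW a haIcc) hga hab ha0 hb.2.le hglt
  have hθa : θ a ≤ m a := by
    by_contra hc; push_neg at hc
    exact absurd ((hiff a haIcc).2.mpr hc) (not_lt.mpr hha)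
  have hhb : 0 ≤ h b := slope_nonneg_left (hgdW b hbIcc) hgb hab ha0 hb.2.le hglt
  have hθb : m b ≤ θ b := by
    by_contra hc; push_neg at hc
    exact absurd ((hiff b hbIcc).1.mpr hc) (not_lt.mpr hhb)
  have hθdec : StrictAntiOn θ (Icc a b) := by
    apply strictAntiOn_of_deriv_neg (convex_Icc a b)
      (hθcont.mono (Icc_subset_Icc ha0 hbIcc.2))
    intro x hx
    rw [interior_Icc] at hx
    have hx1 : x ∈ Ioo (0:ℝ) 1 := ⟨lt_of_le_of_lt ha0 hx.1, hx.2.trans hb.2⟩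
    rw [(hθd x hx1).deriv]
    exact hglt x hx
  have hθab : θ b < θ a := hθdec (left_mem_Icc.mpr hab.le) (right_mem_Icc.mpr hab.le) hab
  have hmab : m a < m b := hmono ⟨ha0, by linarith⟩ ⟨hb.1.le, hbρ⟩ hab
  linarith

private lemma no_right_pos {ρ : ℝ} {m θ g h : ℝ → ℝ} (hρ : ρ ∈ Ioo (0:ℝ) 1)
    (hgcont : ContinuousOn g (Icc 0 1)) (hθcont : ContinuousOn θ (Icc 0 1))
    (hgdW : ∀ x ∈ Icc (0:ℝ) 1, HasDerivWithinAt g (h x) (Icc 0 1) x)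
    (hθd : ∀ x ∈ Ioo (0:ℝ) 1, HasDerivAt θ (g x) x)
    (hiff : ∀ x ∈ Icc (0:ℝ) 1, (h x < 0 ↔ θ x < m x) ∧ (0 < h x ↔ m x < θ x))
    (hanti : StrictAntiOn m (Icc ρ 1))
    (hbc1 : g 1 = 0) {a : ℝ} (ha : a ∈ Ioo (0:ℝ) 1) (haρ : ρ ≤ a) (hga : g a = 0)
    (hδex : ∃ δ > 0, ∀ x ∈ Ioo a (a + δ), 0 < g x) : False := by
  obtain ⟨δ₀, hδ₀, hpos₀⟩ := hδex
  obtain ⟨δ, hδdef⟩ : ∃ z, z = min δ₀ ((1 - a) / 2) := ⟨_, rfl⟩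
  have hδpos : 0 < δ := by rw [hδdef]; exact lt_min hδ₀ (by linarith [ha.2])
  have hδa : a + δ < 1 := by
    have := min_le_right δ₀ ((1 - a) / 2); linarith [ha.2]
  have hpos : ∀ x ∈ Ioo a (a + δ), 0 < g x := by
    intro x hx
    have h1 := min_le_left δ₀ ((1 - a) / 2)
    exact hpos₀ x ⟨hx.1, by linarith [hx.2]⟩
  have hTclosed : IsClosed (Icc (a + δ) (1:ℝ) ∩ g ⁻¹' {0}) :=
    (hgcont.mono (Icc_subset_Icc (by linarith [ha.1]) le_rfl)).preimage_isClosed_of_isClosed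
      isClosed_Icc isClosed_singleton
  have hTcp : IsCompact (Icc (a + δ) (1:ℝ) ∩ g ⁻¹' {0}) :=
    isCompact_Icc.of_isClosed_subset hTclosed inter_subset_left
  have hTne : (Icc (a + δ) (1:ℝ) ∩ g ⁻¹' {0}).Nonempty :=
    ⟨1, ⟨hδa.le, le_rfl⟩, by simpa using hbc1⟩
  obtain ⟨b, hbdef⟩ : ∃ z, z = sInf (Icc (a + δ) (1:ℝ) ∩ g ⁻¹' {0}) := ⟨_, rfl⟩
  have hbT : b ∈ Icc (a + δ) (1:ℝ) ∩ g ⁻¹' {0} := hbdef ▸ hTcp.sInf_mem hTne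
  obtain ⟨⟨hbδ, hb1⟩, hgb'⟩ := hbT
  have hgb : g b = 0 := by simpa using hgb'
  have hab : a < b := by linarith
  have hglt : ∀ x ∈ Ioo a b, 0 < g x := by
    intro x hx
    by_contra hge
    push_neg at hge
    have hzero : ∀ z, a < z → z < b → g z ≠ 0 := by
      intro z hz1 hz2 h0
      have hzle : a + δ ≤ z := by
        by_contra hgt; push_neg at hgt
        exact absurd h0 (ne_of_gt (hpos z ⟨hz1, hgt⟩))
      have : b ≤ z := hbdef ▸ csInf_le hTcp.bddBelow ⟨⟨hzle, by linarith⟩, by simpa using h0⟩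
      linarith
    have hxneg : g x < 0 := lt_of_le_of_ne hge (hzero x hx.1 hx.2)
    have hxge : a + δ ≤ x := by
      by_contra hgt; push_neg at hgt
      exact absurd hxneg (not_lt.mpr (hpos x ⟨hx.1, hgt⟩).le)
    have hgw : 0 < g (a + δ / 2) := hpos _ ⟨by linarith, by linarith⟩
    have hwx : a + δ / 2 < x := by linarith
    have hivt : (0:ℝ) ∈ g '' Icc (a + δ / 2) x := by
      apply intermediate_value_Icc' hwx.le (hgcont.mono ?_)
      · exact ⟨hxneg.le, hgw.le⟩
      · intro y hy
        exact ⟨by linarith [hy.1, ha.1], by linarith [hy.2, hx.2, hb1]⟩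
    obtain ⟨z, hz, hgz⟩ := hivt
    exact hzero z (by linarith [hz.1]) (lt_of_le_of_lt hz.2 hx.2) hgz
  have haIcc : a ∈ Icc (0:ℝ) 1 := ⟨ha.1.le, ha.2.le⟩
  have hbIcc : b ∈ Icc (0:ℝ) 1 := ⟨by linarith [ha.1], hb1⟩
  have hha : 0 ≤ h a := slope_nonneg_right (hgdW a haIcc) hga hab ha.1.le hb1 hglt
  have hθa : m a ≤ θ a := by
    by_contra hc; push_neg at hc
    exact absurd ((hiff a haIcc).1.mpr hc) (not_lt.mpr hha)
  have hhb : h b ≤ 0 := slope_nonpos_left (hgdW b hbIcc) hgb hab ha.1.le hb1 hglt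
  have hθb : θ b ≤ m b := by
    by_contra hc; push_neg at hc
    exact absurd ((hiff b hbIcc).2.mpr hc) (not_lt.mpr hhb)
  have hθinc : StrictMonoOn θ (Icc a b) := by
    apply strictMonoOn_of_deriv_pos (convex_Icc a b)
      (hθcont.mono (Icc_subset_Icc haIcc.1 hb1))
    intro x hx
    rw [interior_Icc] at hx
    have hx1 : x ∈ Ioo (0:ℝ) 1 := ⟨lt_trans ha.1 hx.1, lt_of_lt_of_le hx.2 hb1⟩
    rw [(hθd x hx1).deriv]
    exact hglt x hx
  have hθab : θ a < θ b := hθinc (left_mem_Icc.mpr hab.le) (right_mem_Icc.mpr hab.le) hab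
  have hmab : m b < m a := hanti ⟨haρ, ha.2.le⟩ ⟨by linarith, hb1⟩ hab
  linarith

/-- For a unimodal resource `m` (increasing then decreasing), the derivative of the
Neumann logistic steady state changes sign at most once: `θ' > 0` on `(0,1)`, or
`θ' < 0` on `(0,1)`, or there is an interior nondegenerate maximum point. -/
theorem theta_unimodal (μ : ℝ) (hμ : 0 < μ) (ρ : ℝ) (hρ : ρ ∈ Ioo (0:ℝ) 1)
    (m θ : ℝ → ℝ)
    (hm : ContDiffOn ℝ 1 m (Icc 0 1))
    (hminc : ∀ x ∈ Ico (0:ℝ) ρ, 0 < derivWithin m (Icc 0 1) x)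
    (hmdec : ∀ x ∈ Ioc ρ (1:ℝ), derivWithin m (Icc 0 1) x < 0)
    (hθreg : ContDiffOn ℝ 2 θ (Icc 0 1))
    (hθpos : ∀ x ∈ Icc (0:ℝ) 1, 0 < θ x)
    (hnonconst : ∃ x ∈ Icc (0:ℝ) 1, ∃ y ∈ Icc (0:ℝ) 1, θ x ≠ θ y)
    (hode : ∀ x ∈ Ioo (0:ℝ) 1,
      μ * derivWithin (derivWithin θ (Icc 0 1)) (Icc 0 1) x + θ x * (m x - θ x) = 0)
    (hbc0 : derivWithin θ (Icc 0 1) 0 = 0) (hbc1 : derivWithin θ (Icc 0 1) 1 = 0)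
    (hbounds : ∀ x ∈ Icc (0:ℝ) 1,
      sInf ((fun y => max (m y) 0) '' Icc (0:ℝ) 1) < θ x ∧ θ x < sSup (m '' Icc (0:ℝ) 1)) :
    (∀ x ∈ Ioo (0:ℝ) 1, 0 < derivWithin θ (Icc 0 1) x) ∨
    (∀ x ∈ Ioo (0:ℝ) 1, derivWithin θ (Icc 0 1) x < 0) ∨
    (∃ x1 ∈ Ioo (0:ℝ) 1,
      (∀ x ∈ Ioo (0:ℝ) x1, 0 < derivWithin θ (Icc 0 1) x) ∧
      derivWithin θ (Icc 0 1) x1 = 0 ∧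
      derivWithin (derivWithin θ (Icc 0 1)) (Icc 0 1) x1 < 0 ∧
      (∀ x ∈ Ioo x1 (1:ℝ), derivWithin θ (Icc 0 1) x < 0)) := by
  have hud : UniqueDiffOn ℝ (Icc (0:ℝ) 1) := uniqueDiffOn_Icc one_pos
  set g : ℝ → ℝ := derivWithin θ (Icc 0 1) with hgdef
  set h : ℝ → ℝ := derivWithin g (Icc 0 1) with hhdef
  -- basic regularity
  have hθcont : ContinuousOn θ (Icc 0 1) := hθreg.continuousOn
  have hθdOn : DifferentiableOn ℝ θ (Icc 0 1) := hθreg.differentiableOn two_ne_zero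
  have hgC1 : ContDiffOn ℝ 1 g (Icc 0 1) := hθreg.derivWithin hud (by norm_num)
  have hgcont : ContinuousOn g (Icc 0 1) := hgC1.continuousOn
  have hgdOn : DifferentiableOn ℝ g (Icc 0 1) := hgC1.differentiableOn one_ne_zero
  have hhC0 : ContDiffOn ℝ 0 h (Icc 0 1) := hgC1.derivWithin hud (by norm_num)
  have hhcont : ContinuousOn h (Icc 0 1) := hhC0.continuousOn
  have hmdOn : DifferentiableOn ℝ m (Icc 0 1) := hm.differentiableOn one_ne_zero
  have hθd : ∀ x ∈ Ioo (0:ℝ) 1, HasDerivAt θ (g x) x := by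
    intro x hx
    have hmem : Icc (0:ℝ) 1 ∈ 𝓝 x := Icc_mem_nhds hx.1 hx.2
    have hd := (hθdOn x (Ioo_subset_Icc_self hx)).differentiableAt hmem
    rw [hgdef, derivWithin_of_mem_nhds hmem]
    exact hd.hasDerivAt
  have hgd : ∀ x ∈ Ioo (0:ℝ) 1, HasDerivAt g (h x) x := by
    intro x hx
    have hmem : Icc (0:ℝ) 1 ∈ 𝓝 x := Icc_mem_nhds hx.1 hx.2
    have hd := (hgdOn x (Ioo_subset_Icc_self hx)).differentiableAt hmem
    rw [hhdef, derivWithin_of_mem_nhds hmem]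
    exact hd.hasDerivAt
  have hmd : ∀ x ∈ Ioo (0:ℝ) 1, HasDerivAt m (derivWithin m (Icc 0 1) x) x := by
    intro x hx
    have hmem : Icc (0:ℝ) 1 ∈ 𝓝 x := Icc_mem_nhds hx.1 hx.2
    have hd := (hmdOn x (Ioo_subset_Icc_self hx)).differentiableAt hmem
    rw [derivWithin_of_mem_nhds hmem]
    exact hd.hasDerivAt
  have hgdW : ∀ x ∈ Icc (0:ℝ) 1, HasDerivWithinAt g (h x) (Icc 0 1) x :=
    fun x hx => (hgdOn x hx).hasDerivWithinAt
  -- ODE on the closed interval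
  have hodeIcc : ∀ x ∈ Icc (0:ℝ) 1, μ * h x + θ x * (m x - θ x) = 0 := by
    intro x hx
    have hFcont : ContinuousOn (fun y => μ * h y + θ y * (m y - θ y)) (Icc 0 1) :=
      ((continuousOn_const.mul hhcont).add (hθcont.mul (hm.continuousOn.sub hθcont)))
    have hxcl : x ∈ closure (Ioo (0:ℝ) 1) := by
      rw [closure_Ioo (by norm_num : (0:ℝ) ≠ 1)]; exact hx
    have hne : (𝓝[Ioo (0:ℝ) 1] x).NeBot := mem_closure_iff_nhdsWithin_neBot.mp hxcl
    have h1 : Tendsto (fun y => μ * h y + θ y * (m y - θ y)) (𝓝[Ioo (0:ℝ) 1] x)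
        (𝓝 (μ * h x + θ x * (m x - θ x))) :=
      (hFcont x hx).mono_left (nhdsWithin_mono _ Ioo_subset_Icc_self)
    have h2 : Tendsto (fun y => μ * h y + θ y * (m y - θ y)) (𝓝[Ioo (0:ℝ) 1] x) (𝓝 0) := by
      apply Tendsto.congr' _ tendsto_const_nhds
      filter_upwards [eventually_mem_nhdsWithin] with y hy
      exact (hode y hy).symm
    exact tendsto_nhds_unique h1 h2
  -- sign dictionary
  have hiff : ∀ x ∈ Icc (0:ℝ) 1, (h x < 0 ↔ θ x < m x) ∧ (0 < h x ↔ m x < θ x) := by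
    intro x hx
    have he := hodeIcc x hx
    have hp := hθpos x hx
    constructor
    · constructor
      · intro hh; nlinarith
      · intro hh; nlinarith
    · constructor
      · intro hh; nlinarith
      · intro hh; nlinarith
  -- monotonicity of m
  have hmono : StrictMonoOn m (Icc 0 ρ) := by
    apply strictMonoOn_of_deriv_pos (convex_Icc 0 ρ)
      (hm.continuousOn.mono (Icc_subset_Icc le_rfl hρ.2.le))
    intro x hx
    rw [interior_Icc] at hx
    have hx1 : x ∈ Ioo (0:ℝ) 1 := ⟨hx.1, hx.2.trans hρ.2⟩
    rw [(hmd x hx1).deriv]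
    exact hminc x ⟨hx.1.le, hx.2⟩
  have hanti : StrictAntiOn m (Icc ρ 1) := by
    apply strictAntiOn_of_deriv_neg (convex_Icc ρ 1)
      (hm.continuousOn.mono (Icc_subset_Icc hρ.1.le le_rfl))
    intro x hx
    rw [interior_Icc] at hx
    have hx1 : x ∈ Ioo (0:ℝ) 1 := ⟨hρ.1.trans hx.1, hx.2⟩
    rw [(hmd x hx1).deriv]
    exact hmdec x ⟨hx.1, hx.2.le⟩
  -- θ < m ρ
  have hsup : sSup (m '' Icc (0:ℝ) 1) = m ρ := by
    apply IsGreatest.csSup_eq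
    constructor
    · exact ⟨ρ, ⟨hρ.1.le, hρ.2.le⟩, rfl⟩
    · rintro y ⟨x, hx, rfl⟩
      rcases le_total x ρ with hc | hc
      · exact hmono.monotoneOn ⟨hx.1, hc⟩ ⟨hρ.1.le, le_rfl⟩ hc
      · exact (hanti.antitoneOn ⟨le_rfl, hρ.2.le⟩ ⟨hc, hx.2⟩ hc)
  have hmax : ∀ x ∈ Icc (0:ℝ) 1, θ x < m ρ := by
    intro x hx
    have := (hbounds x hx).2
    rwa [hsup] at this
  -- classification of interior zeros of g
  have hclass : ∀ x₀ ∈ Ioo (0:ℝ) 1, g x₀ = 0 → θ x₀ < m x₀ := by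
    intro x₀ hx₀ hg0
    have hx₀I : x₀ ∈ Icc (0:ℝ) 1 := Ioo_subset_Icc_self hx₀
    rcases lt_trichotomy (θ x₀) (m x₀) with hlt | heq | hgt
    · exact hlt
    · exfalso
      have hh0 : h x₀ = 0 := by
        have := hodeIcc x₀ hx₀I
        have hμ' : μ ≠ 0 := ne_of_gt hμ
        have h3 : θ x₀ * (m x₀ - θ x₀) = 0 := by rw [heq]; ring
        have : μ * h x₀ = 0 := by linarith
        exact (mul_eq_zero.mp this).resolve_left hμ'
      rcases lt_trichotomy x₀ ρ with hxρ | hxeq | hxρ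
      · -- θ = m at x₀ < ρ : third derivative negative, g < 0 on both sides
        have hm' := hminc x₀ ⟨hx₀.1.le, hxρ⟩
        have hEq : Set.EqOn h (fun x => θ x * (θ x - m x) / μ) (Ioo (0:ℝ) 1) := by
          intro x hx
          have := hodeIcc x (Ioo_subset_Icc_self hx)
          field_simp
          linarith
        have hRHS : HasDerivAt (fun x => θ x * (θ x - m x) / μ)
            ((g x₀ * (θ x₀ - m x₀) + θ x₀ * (g x₀ - derivWithin m (Icc 0 1) x₀)) / μ) x₀ :=
          (((hθd x₀ hx₀).mul ((hθd x₀ hx₀).sub (hmd x₀ hx₀))).div_const μ)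
        have hM : HasDerivAt h
            ((g x₀ * (θ x₀ - m x₀) + θ x₀ * (g x₀ - derivWithin m (Icc 0 1) x₀)) / μ) x₀ :=
          hRHS.congr_of_eventuallyEq (eventuallyEq_of_mem (Ioo_mem_nhds hx₀.1 hx₀.2) hEq)
        have hMneg : (g x₀ * (θ x₀ - m x₀) + θ x₀ * (g x₀ - derivWithin m (Icc 0 1) x₀)) / μ < 0 := by
          have hp := hθpos x₀ hx₀I
          rw [hg0]
          apply div_neg_of_neg_of_pos _ hμ
          nlinarith
        obtain ⟨δ, hδ, hL, hR⟩ := second_order_neg hgcont hgd hx₀ hg0 hh0 hM hMneg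
        exact no_left_neg hρ hgcont hθcont hgdW hθd hiff hmono hbc0 hx₀ hxρ.le hg0 ⟨δ, hδ, hL⟩
      · exact absurd heq (ne_of_lt (hxeq ▸ hmax x₀ hx₀I))
      · -- θ = m at x₀ > ρ
        have hm' := hmdec x₀ ⟨hxρ, hx₀.2.le⟩
        have hEq : Set.EqOn h (fun x => θ x * (θ x - m x) / μ) (Ioo (0:ℝ) 1) := by
          intro x hx
          have := hodeIcc x (Ioo_subset_Icc_self hx)
          field_simp
          linarith
        have hRHS : HasDerivAt (fun x => θ x * (θ x - m x) / μ)
            ((g x₀ * (θ x₀ - m x₀) + θ x₀ * (g x₀ - derivWithin m (Icc 0 1) x₀)) / μ) x₀ :=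
          (((hθd x₀ hx₀).mul ((hθd x₀ hx₀).sub (hmd x₀ hx₀))).div_const μ)
        have hM : HasDerivAt h
            ((g x₀ * (θ x₀ - m x₀) + θ x₀ * (g x₀ - derivWithin m (Icc 0 1) x₀)) / μ) x₀ :=
          hRHS.congr_of_eventuallyEq (eventuallyEq_of_mem (Ioo_mem_nhds hx₀.1 hx₀.2) hEq)
        have hMpos : 0 < (g x₀ * (θ x₀ - m x₀) + θ x₀ * (g x₀ - derivWithin m (Icc 0 1) x₀)) / μ := by
          have hp := hθpos x₀ hx₀I
          rw [hg0]
          apply div_pos _ hμ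
          nlinarith
        obtain ⟨δ, hδ, hL, hR⟩ := second_order_pos hgcont hgd hx₀ hg0 hh0 hM hMpos
        exact no_right_pos hρ hgcont hθcont hgdW hθd hiff hanti hbc1 hx₀ hxρ.le hg0 ⟨δ, hδ, hR⟩
    · exfalso
      have hh : 0 < h x₀ := (hiff x₀ hx₀I).2.mpr hgt
      obtain ⟨δ, hδ, hL, hR⟩ := sign_near_pos (hgd x₀ hx₀) hg0 hh
      rcases le_or_gt x₀ ρ with hc | hc
      · exact no_left_neg hρ hgcont hθcont hgdW hθd hiff hmono hbc0 hx₀ hc hg0 ⟨δ, hδ, hL⟩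
      · exact no_right_pos hρ hgcont hθcont hgdW hθd hiff hanti hbc1 hx₀ hc.le hg0 ⟨δ, hδ, hR⟩
  -- local sign structure at each interior zero
  have hdata : ∀ z ∈ Ioo (0:ℝ) 1, g z = 0 →
      ∃ δ > 0, (∀ x ∈ Ioo (z - δ) z, 0 < g x) ∧ (∀ x ∈ Ioo z (z + δ), g x < 0) := by
    intro z hzI hgz
    have hθm := hclass z hzI hgz
    have hh : h z < 0 := (hiff z (Ioo_subset_Icc_self hzI)).1.mpr hθm
    exact sign_near_neg (hgd z hzI) hgz hh
  by_cases hz : ∃ x1 ∈ Ioo (0:ℝ) 1, g x1 = 0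
  · obtain ⟨x1, hx1, hgx1⟩ := hz
    -- no two distinct interior zeros
    have hpair : ∀ u v : ℝ, u ∈ Ioo (0:ℝ) 1 → v ∈ Ioo (0:ℝ) 1 → g u = 0 → g v = 0 →
        u < v → False := by
      intro u v hu hv hgu hgv huv
      obtain ⟨δ₁, hδ₁, _, hR₁⟩ := hdata u hu hgu
      obtain ⟨δ₂, hδ₂, hL₂, _⟩ := hdata v hv hgv
      obtain ⟨p, hpdef⟩ : ∃ z, z = u + min δ₁ (v - u) / 2 := ⟨_, rfl⟩
      have hmin1 : 0 < min δ₁ (v - u) := lt_min hδ₁ (by linarith)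
      have hmin1a := min_le_left δ₁ (v - u)
      have hmin1b := min_le_right δ₁ (v - u)
      have hpu : u < p := by rw [hpdef]; linarith
      have hpδ : p < u + δ₁ := by rw [hpdef]; linarith
      have hpv : p < v := by rw [hpdef]; linarith
      have hgp : g p < 0 := hR₁ p ⟨hpu, hpδ⟩
      obtain ⟨q, hqdef⟩ : ∃ z, z = v - min δ₂ (v - p) / 2 := ⟨_, rfl⟩
      have hmin2 : 0 < min δ₂ (v - p) := lt_min hδ₂ (by linarith)
      have hmin2a := min_le_left δ₂ (v - p)
      have hmin2b := min_le_right δ₂ (v - p)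
      have hqv : q < v := by rw [hqdef]; linarith
      have hqδ : v - δ₂ < q := by rw [hqdef]; linarith
      have hpq : p < q := by rw [hqdef]; linarith
      have hgq : 0 < g q := hL₂ q ⟨hqδ, hqv⟩
      have hp0 : 0 < p := lt_trans hu.1 hpu
      have hq1 : q < 1 := lt_trans hqv hv.2
      have hsubpq : Icc p q ⊆ Icc (0:ℝ) 1 := Icc_subset_Icc (by linarith) (by linarith)
      have hTclosed : IsClosed (Icc p q ∩ g ⁻¹' {0}) :=
        (hgcont.mono hsubpq).preimage_isClosed_of_isClosed isClosed_Icc isClosed_singleton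
      have hTcp : IsCompact (Icc p q ∩ g ⁻¹' {0}) :=
        isCompact_Icc.of_isClosed_subset hTclosed inter_subset_left
      have hTne : (Icc p q ∩ g ⁻¹' {0}).Nonempty := by
        obtain ⟨z, hzm, hgz⟩ := intermediate_value_Icc hpq.le (hgcont.mono hsubpq)
          (⟨hgp.le, hgq.le⟩ : (0:ℝ) ∈ Icc (g p) (g q))
        exact ⟨z, hzm, by simpa using hgz⟩
      obtain ⟨z, hzdef⟩ : ∃ w, w = sInf (Icc p q ∩ g ⁻¹' {0}) := ⟨_, rfl⟩
      have hzT : z ∈ Icc p q ∩ g ⁻¹' {0} := hzdef ▸ hTcp.sInf_mem hTne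
      obtain ⟨⟨hzp', hzq'⟩, hgz'⟩ := hzT
      have hgz : g z = 0 := by simpa using hgz'
      have hzp : p < z := lt_of_le_of_ne hzp' (fun hh => (ne_of_lt hgp) (by rw [hh, hgz]))
      have hzq : z < q := lt_of_le_of_ne hzq' (fun hh => (ne_of_gt hgq) (by rw [← hh, hgz]))
      have hzI : z ∈ Ioo (0:ℝ) 1 := ⟨lt_trans hp0 hzp, lt_trans hzq hq1⟩
      obtain ⟨δ₃, hδ₃, hL₃, _⟩ := hdata z hzI hgz
      obtain ⟨w', hw'def⟩ : ∃ w, w = (max p (z - δ₃) + z) / 2 := ⟨_, rfl⟩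
      have hmaxp := le_max_left p (z - δ₃)
      have hmaxδ := le_max_right p (z - δ₃)
      have hwz : max p (z - δ₃) < z := max_lt hzp (by linarith)
      have hw'1 : max p (z - δ₃) < w' := by rw [hw'def]; linarith
      have hw'z : w' < z := by rw [hw'def]; linarith
      have hgw' : 0 < g w' := hL₃ w' ⟨by linarith, hw'z⟩
      have hpw' : p < w' := by linarith
      obtain ⟨z', hz'm, hgz'2⟩ := intermediate_value_Icc hpw'.le
        (hgcont.mono (Icc_subset_Icc (by linarith) (by linarith)))
        (⟨hgp.le, hgw'.le⟩ : (0:ℝ) ∈ Icc (g p) (g w'))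
      have hz'z : z ≤ z' := by
        rw [hzdef]
        exact csInf_le hTcp.bddBelow ⟨⟨hz'm.1, by linarith [hz'm.2]⟩, by simpa using hgz'2⟩
      linarith [hz'm.2]
    have huniq : ∀ z ∈ Ioo (0:ℝ) 1, g z = 0 → z = x1 := by
      intro z hzI hgz
      by_contra hne
      rcases lt_or_gt_of_ne hne with hlt | hgt
      · exact hpair z x1 hzI hx1 hgz hgx1 hlt
      · exact hpair x1 z hx1 hzI hgx1 hgz hgt
    right; right
    obtain ⟨δ, hδ, hL, hR⟩ := hdata x1 hx1 hgx1
    refine ⟨x1, hx1, ?_, hgx1, ?_, ?_⟩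
    · -- g > 0 on (0, x1)
      intro x hx
      by_contra hle
      push_neg at hle
      have hxI : x ∈ Ioo (0:ℝ) 1 := ⟨hx.1, lt_trans hx.2 hx1.2⟩
      have hxne : g x ≠ 0 := fun h0 => (ne_of_lt hx.2) (huniq x hxI h0)
      have hgx : g x < 0 := lt_of_le_of_ne hle hxne
      obtain ⟨c, hcdef⟩ : ∃ z, z = x1 - min δ (x1 - x) / 2 := ⟨_, rfl⟩
      have hmina := min_le_left δ (x1 - x)
      have hminb := min_le_right δ (x1 - x)
      have hminpos : 0 < min δ (x1 - x) := lt_min hδ (by linarith [hx.2])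
      have hcx : x < c := by rw [hcdef]; linarith
      have hcx1 : c < x1 := by rw [hcdef]; linarith
      have hcd : x1 - δ < c := by rw [hcdef]; linarith
      have hgc : 0 < g c := hL c ⟨hcd, hcx1⟩
      obtain ⟨z, hzm, hgz⟩ := intermediate_value_Icc hcx.le
        (hgcont.mono (Icc_subset_Icc hx.1.le (by linarith [hx1.2])))
        (⟨hgx.le, hgc.le⟩ : (0:ℝ) ∈ Icc (g x) (g c))
      have hzI : z ∈ Ioo (0:ℝ) 1 := ⟨lt_of_lt_of_le hx.1 hzm.1, by linarith [hzm.2, hx1.2]⟩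
      have := huniq z hzI hgz
      linarith [hzm.2]
    · exact (hiff x1 (Ioo_subset_Icc_self hx1)).1.mpr (hclass x1 hx1 hgx1)
    · -- g < 0 on (x1, 1)
      intro x hx
      by_contra hle
      push_neg at hle
      have hxI : x ∈ Ioo (0:ℝ) 1 := ⟨lt_trans hx1.1 hx.1, hx.2⟩
      have hxne : g x ≠ 0 := fun h0 => (ne_of_gt hx.1) (huniq x hxI h0)
      have hgx : 0 < g x := lt_of_le_of_ne hle (Ne.symm hxne)
      obtain ⟨c, hcdef⟩ : ∃ z, z = x1 + min δ (x - x1) / 2 := ⟨_, rfl⟩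
      have hmina := min_le_left δ (x - x1)
      have hminb := min_le_right δ (x - x1)
      have hminpos : 0 < min δ (x - x1) := lt_min hδ (by linarith [hx.1])
      have hcx : c < x := by rw [hcdef]; linarith
      have hcx1 : x1 < c := by rw [hcdef]; linarith
      have hcd : c < x1 + δ := by rw [hcdef]; linarith
      have hgc : g c < 0 := hR c ⟨hcx1, hcd⟩
      obtain ⟨z, hzm, hgz⟩ := intermediate_value_Icc hcx.le
        (hgcont.mono (Icc_subset_Icc (by linarith [hx1.1]) hx.2.le))
        (⟨hgc.le, hgx.le⟩ : (0:ℝ) ∈ Icc (g c) (g x))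
      have hzI : z ∈ Ioo (0:ℝ) 1 := ⟨by linarith [hzm.1, hx1.1], lt_of_le_of_lt hzm.2 hx.2⟩
      have := huniq z hzI hgz
      linarith [hzm.1]
  · -- no interior zero: constant sign
    push_neg at hz
    rcases lt_trichotomy (g (1/2 : ℝ)) 0 with hneg | h0 | hpos
    · right; left
      intro x hx
      by_contra hge
      push_neg at hge
      have hgx : 0 < g x := lt_of_le_of_ne hge (Ne.symm (hz x hx))
      rcases lt_trichotomy x (1/2 : ℝ) with hc | hc | hc
      · obtain ⟨z, hzm, hgz⟩ := intermediate_value_Icc' hc.le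
          (hgcont.mono (Icc_subset_Icc hx.1.le (by norm_num)))
          (⟨hneg.le, hgx.le⟩ : (0:ℝ) ∈ Icc (g (1/2)) (g x))
        exact hz z ⟨lt_of_lt_of_le hx.1 hzm.1, lt_of_le_of_lt hzm.2 (by norm_num)⟩ hgz
      · rw [hc] at hgx; linarith
      · obtain ⟨z, hzm, hgz⟩ := intermediate_value_Icc (le_of_lt hc)
          (hgcont.mono (Icc_subset_Icc (by norm_num) hx.2.le))
          (⟨hneg.le, hgx.le⟩ : (0:ℝ) ∈ Icc (g (1/2)) (g x))
        exact hz z ⟨lt_of_lt_of_le (by norm_num) hzm.1, lt_of_le_of_lt hzm.2 hx.2⟩ hgz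
    · exact absurd h0 (hz (1/2) (by norm_num))
    · left
      intro x hx
      by_contra hge
      push_neg at hge
      have hgx : g x < 0 := lt_of_le_of_ne hge (hz x hx)
      rcases lt_trichotomy x (1/2 : ℝ) with hc | hc | hc
      · obtain ⟨z, hzm, hgz⟩ := intermediate_value_Icc hc.le
          (hgcont.mono (Icc_subset_Icc hx.1.le (by norm_num)))
          (⟨hgx.le, hpos.le⟩ : (0:ℝ) ∈ Icc (g x) (g (1/2)))
        exact hz z ⟨lt_of_lt_of_le hx.1 hzm.1, lt_of_le_of_lt hzm.2 (by norm_num)⟩ hgz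
      · rw [hc] at hgx; linarith
      · obtain ⟨z, hzm, hgz⟩ := intermediate_value_Icc' (le_of_lt hc)
          (hgcont.mono (Icc_subset_Icc (by norm_num) hx.2.le))
          (⟨hgx.le, hpos.le⟩ : (0:ℝ) ∈ Icc (g x) (g (1/2)))
        exact hz z ⟨lt_of_lt_of_le (by norm_num) hzm.1, lt_of_le_of_lt hzm.2 hx.2⟩ hgz
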